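/- Let f : ℝ → ℝ be twice differentiable with f''(ω) = f(ω)·f'(ω) for all ω, and let Ω = {(t,x,v) ∈ ℝ³ : v + t·f(x) ≠ 0}. Define on Ω: ξ(t,x,v) = −2/(v + t·f(x)) and θ(t,x,v) = f(x) − 2t·f'(x)/(v + t·f(x)) (so that θ = φ_t + φ_x ξ with φ = t·f(x)). Then the pair (ξ, θ) satisfies the determining system for reduction operators of the potential fast diffusion equation on Ω. (This verifies Case 3 with φ = t·f(x) of the classification theorem of non-Lie reduction operators.) -/

import Mathlib

lemma hasDerivAt_invlin (a c v : ℝ) (h : v + c ≠ 0) :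
    HasDerivAt (fun v' => a / (v' + c)) (-a / (v + c) ^ 2) v := by
  have := (hasDerivAt_const v a).div ((hasDerivAt_id v).add_const c) h
  refine this.congr_deriv ?_; simp only [id_eq]; ring

lemma hasDerivAt_invsq (a c v : ℝ) (h : v + c ≠ 0) :
    HasDerivAt (fun v' => a / (v' + c) ^ 2) (-2 * a / (v + c) ^ 3) v := by
  have := (hasDerivAt_const v a).div (((hasDerivAt_id v).add_const c).pow 2)
    (pow_ne_zero 2 h)
  refine this.congr_deriv ?_; simp only [id_eq, Pi.pow_apply]; field_simp; ring



/-- Partial derivative with respect to the first variable `t`. -/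
noncomputable def pt3 (f : ℝ × ℝ × ℝ → ℝ) (p : ℝ × ℝ × ℝ) : ℝ :=
  deriv (fun t => f (t, p.2.1, p.2.2)) p.1

/-- Partial derivative with respect to the second variable `x`. -/
noncomputable def px3 (f : ℝ × ℝ × ℝ → ℝ) (p : ℝ × ℝ × ℝ) : ℝ :=
  deriv (fun x => f (p.1, x, p.2.2)) p.2.1

/-- Partial derivative with respect to the third variable `v`. -/
noncomputable def pv3 (f : ℝ × ℝ × ℝ → ℝ) (p : ℝ × ℝ × ℝ) : ℝ :=
  deriv (fun v => f (p.1, p.2.1, v)) p.2.2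

/-- The determining system for reduction operators `Q = ∂_t + ξ∂_x + θ∂_v`
of the potential fast diffusion equation `v_t = v_xx / v_x`:
(i) `ξ_vv = ξ ξ_v`; (ii) `ξ_t = 2ξ_xv − θ_vv − θ_v ξ + θ ξ_v − ξ ξ_x`;
(iii) `θ_xx = θ θ_x`; (iv) `θ_t = 2θ_xv − ξ_xx − ξ_x θ + ξ θ_x − θ θ_v`. -/
def DeterminingSystem (ξ θ : ℝ × ℝ × ℝ → ℝ) (Ω : Set (ℝ × ℝ × ℝ)) : Prop :=
  ∀ p ∈ Ω,
    pv3 (pv3 ξ) p = ξ p * pv3 ξ p ∧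
    pt3 ξ p =
      2 * pv3 (px3 ξ) p - pv3 (pv3 θ) p - pv3 θ p * ξ p + θ p * pv3 ξ p - ξ p * px3 ξ p ∧
    px3 (px3 θ) p = θ p * px3 θ p ∧
    pt3 θ p =
      2 * pv3 (px3 θ) p - px3 (px3 ξ) p - px3 ξ p * θ p + ξ p * px3 θ p - θ p * pv3 θ p

set_option maxHeartbeats 1000000 in
/-- Case 3 with `φ = t·f(x)` of the classification of non-Lie reduction operators of the
potential fast diffusion equation: `ξ = −2/(v + φ)`, `θ = φ_t + φ_x ξ`,
where `f'' = f f'`. -/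
theorem reduction_operator_case3_tf
    (f : ℝ → ℝ)
    (hf : ∀ ω : ℝ, DifferentiableAt ℝ f ω)
    (hf' : ∀ ω : ℝ, DifferentiableAt ℝ (deriv f) ω)
    (hode : ∀ ω : ℝ, deriv (deriv f) ω = f ω * deriv f ω) :
    DeterminingSystem
      (fun p => -2 / (p.2.2 + p.1 * f p.2.1))
      (fun p => f p.2.1 - 2 * p.1 * deriv f p.2.1 / (p.2.2 + p.1 * f p.2.1))
      {p : ℝ × ℝ × ℝ | p.2.2 + p.1 * f p.2.1 ≠ 0} := by
  intro p hp
  obtain ⟨t, x, v⟩ := p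
  simp only [Set.mem_setOf_eq] at hp
  simp only [DeterminingSystem, pt3, px3, pv3]
  -- eventual nonvanishing
  have hDcont : ∀ᶠ v' in nhds v, v' + t * f x ≠ 0 :=
    (continuous_id.add continuous_const).continuousAt.eventually_ne hp
  have hXcont : ∀ᶠ x' in nhds x, v + t * f x' ≠ 0 :=
    (continuousAt_const.add (continuousAt_const.mul (hf x).continuousAt)).eventually_ne hp
  have hDx : ∀ x' v' : ℝ, HasDerivAt (fun x'' => v' + t * f x'') (t * deriv f x') x' :=
    fun x' v' => ((hf x').hasDerivAt.const_mul t).const_add v'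
  -- ξ_v (general base point)
  have hξv : ∀ v', v' + t * f x ≠ 0 →
      deriv (fun v'' => -2 / (v'' + t * f x)) v' = 2 / (v' + t * f x) ^ 2 := by
    intro v' h
    rw [(hasDerivAt_invlin (-2) (t * f x) v' h).deriv]; ring
  -- ξ_vv
  have hB : deriv (fun v' => deriv (fun v'' => -2 / (v'' + t * f x)) v') v
      = -4 / (v + t * f x) ^ 3 := by
    have hev : (fun v' => deriv (fun v'' => -2 / (v'' + t * f x)) v')
        =ᶠ[nhds v] fun v' => 2 / (v' + t * f x) ^ 2 := hDcont.mono fun v' h => hξv v' h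
    rw [hev.deriv_eq, (hasDerivAt_invsq 2 (t * f x) v hp).deriv]; ring
  -- ξ_t
  have hC : deriv (fun t' => -2 / (v + t' * f x)) t = 2 * f x / (v + t * f x) ^ 2 := by
    have hden : HasDerivAt (fun t' => v + t' * f x) (f x) t := by
      simpa using ((hasDerivAt_id t).mul_const (f x)).const_add v
    erw [((hasDerivAt_const t (-2)).div hden hp).deriv]; ring
  -- ξ_x (general)
  have hξx : ∀ x' v', v' + t * f x' ≠ 0 →
      deriv (fun x'' => -2 / (v' + t * f x'')) x'
        = 2 * t * deriv f x' / (v' + t * f x') ^ 2 := by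
    intro x' v' h
    erw [((hasDerivAt_const x' (-2)).div (hDx x' v') h).deriv]; ring
  -- ξ_xv
  have hE : deriv (fun v' => deriv (fun x' => -2 / (v' + t * f x')) x) v
      = -4 * t * deriv f x / (v + t * f x) ^ 3 := by
    have hev : (fun v' => deriv (fun x' => -2 / (v' + t * f x')) x)
        =ᶠ[nhds v] fun v' => 2 * t * deriv f x / (v' + t * f x) ^ 2 :=
      hDcont.mono fun v' h => hξx x v' h
    rw [hev.deriv_eq, (hasDerivAt_invsq (2 * t * deriv f x) (t * f x) v hp).deriv]; ring
  -- ξ_xx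
  have hF : deriv (fun x' => deriv (fun x'' => -2 / (v + t * f x'')) x') x
      = 2 * t * (f x * deriv f x) / (v + t * f x) ^ 2
        - 4 * t ^ 2 * (deriv f x) ^ 2 / (v + t * f x) ^ 3 := by
    have hev : (fun x' => deriv (fun x'' => -2 / (v + t * f x'')) x')
        =ᶠ[nhds x] fun x' => 2 * t * deriv f x' / (v + t * f x') ^ 2 :=
      hXcont.mono fun x' h => hξx x' v h
    have hnum : HasDerivAt (fun x' => 2 * t * deriv f x') (2 * t * (f x * deriv f x)) x := by
      have := (hf' x).hasDerivAt.const_mul (2 * t)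
      rwa [hode x] at this
    have hden2 : HasDerivAt (fun x' => (v + t * f x') ^ 2)
        (2 * (v + t * f x) * (t * deriv f x)) x := by
      have := (hDx x v).pow 2
      refine this.congr_deriv ?_; ring
    erw [hev.deriv_eq, (hnum.div hden2 (pow_ne_zero 2 hp)).deriv]
    field_simp; ring
  -- θ_v (general)
  have hθv : ∀ v', v' + t * f x ≠ 0 →
      deriv (fun v'' => f x - 2 * t * deriv f x / (v'' + t * f x)) v'
        = 2 * t * deriv f x / (v' + t * f x) ^ 2 := by
    intro v' h
    rw [((hasDerivAt_invlin (2 * t * deriv f x) (t * f x) v' h).const_sub (f x)).deriv]; ring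
  -- θ_vv
  have hH : deriv (fun v' => deriv (fun v'' => f x - 2 * t * deriv f x / (v'' + t * f x)) v') v
      = -4 * t * deriv f x / (v + t * f x) ^ 3 := by
    have hev : (fun v' => deriv (fun v'' => f x - 2 * t * deriv f x / (v'' + t * f x)) v')
        =ᶠ[nhds v] fun v' => 2 * t * deriv f x / (v' + t * f x) ^ 2 :=
      hDcont.mono fun v' h => hθv v' h
    rw [hev.deriv_eq, (hasDerivAt_invsq (2 * t * deriv f x) (t * f x) v hp).deriv]; ring
  -- θ_t
  have hI : deriv (fun t' => f x - 2 * t' * deriv f x / (v + t' * f x)) t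
      = -2 * deriv f x / (v + t * f x) + 2 * t * (f x * deriv f x) / (v + t * f x) ^ 2 := by
    have hden : HasDerivAt (fun t' => v + t' * f x) (f x) t := by
      simpa using ((hasDerivAt_id t).mul_const (f x)).const_add v
    have hnum : HasDerivAt (fun t' => 2 * t' * deriv f x) (2 * deriv f x) t := by
      simpa using ((hasDerivAt_id t).const_mul 2).mul_const (deriv f x)
    erw [((hnum.div hden hp).const_sub (f x)).deriv]
    field_simp; ring
  -- θ_x (general)
  have hθx : ∀ x' v', v' + t * f x' ≠ 0 →
      deriv (fun x'' => f x'' - 2 * t * deriv f x'' / (v' + t * f x'')) x'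
        = deriv f x' - 2 * t * (f x' * deriv f x') / (v' + t * f x')
          + 2 * t ^ 2 * (deriv f x') ^ 2 / (v' + t * f x') ^ 2 := by
    intro x' v' h
    have hnum : HasDerivAt (fun x'' => 2 * t * deriv f x'') (2 * t * (f x' * deriv f x')) x' := by
      have := (hf' x').hasDerivAt.const_mul (2 * t)
      rwa [hode x'] at this
    erw [((hf x').hasDerivAt.sub (hnum.div (hDx x' v') h)).deriv]
    field_simp; ring
  -- θ_xv
  have hL : deriv (fun v' => deriv (fun x' => f x' - 2 * t * deriv f x' / (v' + t * f x')) x) v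
      = 2 * t * (f x * deriv f x) / (v + t * f x) ^ 2
        - 4 * t ^ 2 * (deriv f x) ^ 2 / (v + t * f x) ^ 3 := by
    have hev : (fun v' => deriv (fun x' => f x' - 2 * t * deriv f x' / (v' + t * f x')) x)
        =ᶠ[nhds v] fun v' => deriv f x - 2 * t * (f x * deriv f x) / (v' + t * f x)
          + 2 * t ^ 2 * (deriv f x) ^ 2 / (v' + t * f x) ^ 2 :=
      hDcont.mono fun v' h => hθx x v' h
    erw [hev.deriv_eq,
      (((hasDerivAt_invlin (2 * t * (f x * deriv f x)) (t * f x) v hp).const_sub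
        (deriv f x)).add
        (hasDerivAt_invsq (2 * t ^ 2 * (deriv f x) ^ 2) (t * f x) v hp)).deriv]
    ring
  -- θ_xx
  have hK : deriv (fun x' =>
        deriv (fun x'' => f x'' - 2 * t * deriv f x'' / (v + t * f x'')) x') x
      = f x * deriv f x - 2 * t * (deriv f x) ^ 2 / (v + t * f x)
        - 2 * t * (f x) ^ 2 * deriv f x / (v + t * f x)
        + 6 * t ^ 2 * f x * (deriv f x) ^ 2 / (v + t * f x) ^ 2
        - 4 * t ^ 3 * (deriv f x) ^ 3 / (v + t * f x) ^ 3 := by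
    have hev : (fun x' =>
          deriv (fun x'' => f x'' - 2 * t * deriv f x'' / (v + t * f x'')) x')
        =ᶠ[nhds x] fun x' => deriv f x' - 2 * t * (f x' * deriv f x') / (v + t * f x')
          + 2 * t ^ 2 * (deriv f x') ^ 2 / (v + t * f x') ^ 2 :=
      hXcont.mono fun x' h => hθx x' v h
    have p1 : HasDerivAt (deriv f) (f x * deriv f x) x := by
      have := (hf' x).hasDerivAt; rwa [hode x] at this
    have p2 : HasDerivAt (fun x' => 2 * t * (f x' * deriv f x'))
        (2 * t * (deriv f x * deriv f x + f x * (f x * deriv f x))) x := by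
      have := ((hf x).hasDerivAt.mul (hf' x).hasDerivAt).const_mul (2 * t)
      rwa [hode x] at this
    have p3 : HasDerivAt (fun x' => 2 * t ^ 2 * (deriv f x') ^ 2)
        (2 * t ^ 2 * (2 * deriv f x * (f x * deriv f x))) x := by
      have := ((hf' x).hasDerivAt.pow 2).const_mul (2 * t ^ 2)
      rw [hode x] at this
      refine this.congr_deriv ?_; push_cast; ring
    have hden2 : HasDerivAt (fun x' => (v + t * f x') ^ 2)
        (2 * (v + t * f x) * (t * deriv f x)) x := by
      have := (hDx x v).pow 2
      refine this.congr_deriv ?_; ring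
    erw [hev.deriv_eq,
      ((p1.sub (p2.div (hDx x v) hp)).add (p3.div hden2 (pow_ne_zero 2 hp))).deriv]
    have hp' : v + f x * t ≠ 0 := by rwa [mul_comm (f x)]
    beta_reduce; field_simp; ring
  refine ⟨?_, ?_, ?_, ?_⟩
  · rw [hB, hξv v hp]
    set F := f x; set G := deriv f x; set D := v + t * f x; field_simp; ring
  · rw [hC, hE, hH, hθv v hp, hξv v hp, hξx x v hp]
    set F := f x; set G := deriv f x; set D := v + t * f x; field_simp; ring
  · rw [hK, hθx x v hp]
    set F := f x; set G := deriv f x; set D := v + t * f x; field_simp; ring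
  · rw [hI, hL, hF, hξx x v hp, hθx x v hp, hθv v hp]
    set F := f x; set G := deriv f x; set D := v + t * f x; field_simp; ring
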